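/- Let h₁, h₂, h₃ be classifiers and let G be a finite multiset of classifiers partitioned into G₁, G₂, G₃ of equal sizes, with target f. Suppose for each x: the majority vote h_maj(x) of all classifiers in G satisfies (a) h_maj(x) agrees with h_i(x) for at least one i ∈ {1,2,3} chosen so that (b) at least 1/4 of the classifiers in G \ G_i (i.e., G_j ∪ G_k with {j,k} = {1,2,3}\{i}) agree with h_maj(x). Then for every x with h_maj(x) ≠ f(x), choosing i uniformly from {1,2,3} and g uniformly from G \ G_i, the probability that both h_i(x) ≠ f(x) and g(x) ≠ f(x) is at least 1/12, provided h_i is the majority vote of G_i for each i. -/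

import Mathlib

open Finset

/-- `G` is modeled as the classifiers `g 0, …, g (3k-1)`, with block `Gᵢ` the indices
`t ∈ [i·k, (i+1)·k)`. `hmaj` is the overall majority vote, `h i` the block majorities.
Choosing `i` uniformly from `{0,1,2}` and then `g t` uniformly from `G \ Gᵢ`, the
probability that both `h i` and `g t` err at `x` is at least `1/12` whenever `hmaj`
errs at `x`. -/
theorem stmt_19 {𝒳 : Type*} (k : ℕ) (hk : 1 ≤ k) (g : ℕ → 𝒳 → ℤ) (f : 𝒳 → ℤ)
    (hg : ∀ t < 3 * k, ∀ x, g t x = 1 ∨ g t x = -1)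
    (hmaj : 𝒳 → ℤ)
    (hhmaj : ∀ x, hmaj x = if 0 ≤ ∑ t ∈ Finset.range (3 * k), g t x then 1 else -1)
    (h : ℕ → 𝒳 → ℤ)
    (hh : ∀ i < 3, ∀ x,
      h i x = if 0 ≤ ∑ t ∈ Finset.range k, g (i * k + t) x then 1 else -1)
    (hyp : ∀ x : 𝒳, ∃ i < 3, h i x = hmaj x ∧
      k ≤ 2 * ((Finset.range (3 * k)).filter
        (fun t => ¬(i * k ≤ t ∧ t < (i + 1) * k) ∧ g t x = hmaj x)).card) :
    ∀ x : 𝒳, hmaj x ≠ f x →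
      (1 / 12 : ℝ) ≤ (1 / 3) * ∑ i ∈ Finset.range 3,
        (((Finset.range (3 * k)).filter
          (fun t => ¬(i * k ≤ t ∧ t < (i + 1) * k) ∧ h i x ≠ f x ∧ g t x ≠ f x)).card : ℝ)
          / (2 * k) := by
  intro x hx
  obtain ⟨i, hi3, hie, hcard⟩ := hyp x
  set S := (Finset.range (3 * k)).filter
      (fun t => ¬(i * k ≤ t ∧ t < (i + 1) * k) ∧ g t x = hmaj x) with hS
  set T := (Finset.range (3 * k)).filter
      (fun t => ¬(i * k ≤ t ∧ t < (i + 1) * k) ∧ h i x ≠ f x ∧ g t x ≠ f x) with hT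
  have hsub : S ⊆ T := by
    apply Finset.monotone_filter_right
    intro t _ ht
    refine ⟨ht.1, ?_, ?_⟩
    · rw [hie]; exact hx
    · rw [ht.2]; exact hx
  have hST : (S.card : ℝ) ≤ T.card := by exact_mod_cast Finset.card_le_card hsub
  have hkpos : (0 : ℝ) < k := by exact_mod_cast hk
  have hcard' : (k : ℝ) ≤ 2 * S.card := by exact_mod_cast hcard
  have hterm : (1 / 4 : ℝ) ≤ (T.card : ℝ) / (2 * k) := by
    rw [le_div_iff₀ (by positivity)]
    nlinarith
  have hnonneg : ∀ j ∈ Finset.range 3, (0 : ℝ) ≤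
      (((Finset.range (3 * k)).filter
        (fun t => ¬(j * k ≤ t ∧ t < (j + 1) * k) ∧ h j x ≠ f x ∧ g t x ≠ f x)).card : ℝ)
        / (2 * k) := by
    intro j _
    exact div_nonneg (Nat.cast_nonneg _) (by positivity)
  have hsum : (T.card : ℝ) / (2 * k) ≤ ∑ j ∈ Finset.range 3,
      (((Finset.range (3 * k)).filter
        (fun t => ¬(j * k ≤ t ∧ t < (j + 1) * k) ∧ h j x ≠ f x ∧ g t x ≠ f x)).card : ℝ)
        / (2 * k) :=
    Finset.single_le_sum hnonneg (Finset.mem_range.mpr hi3)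
  linarith
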